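/- For real numbers a > 0, b > 0, k > 1/a, and any t ≥ k b/(k a − 1), the tail integral satisfies ∫ₜ^∞ e^{-a x} x^b dx ≤ k e^{-a t} t^b. -/

import Mathlib

open MeasureTheory Set Filter Real Topology

theorem tail_integral_bound (a b k t : ℝ) (ha : 0 < a) (hb : 0 < b)
    (hk : 1 / a < k) (ht : k * b / (k * a - 1) ≤ t) :
    ∫ x in Set.Ici t, Real.exp (-a * x) * x ^ b ≤ k * Real.exp (-a * t) * t ^ b := by
  have hka : 1 < k * a := by
    rw [div_lt_iff₀ ha] at hk; linarith
  have hk0 : 0 < k := lt_trans (by positivity) hk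
  have ht0 : 0 < t := lt_of_lt_of_le (div_pos (by positivity) (by linarith)) ht
  -- key pointwise inequality : for x ≥ t, x*(k*a-1) ≥ k*b
  set g : ℝ → ℝ := fun x => -(k * Real.exp (-a * x) * x ^ b) with hgdef
  set g' : ℝ → ℝ := fun x => k * Real.exp (-a * x) * (a * x ^ b - b * x ^ (b - 1)) with hg'def
  have hderiv : ∀ x ∈ Ici t, HasDerivAt g (g' x) x := by
    intro x hx
    have hx0 : 0 < x := lt_of_lt_of_le ht0 hx
    have h1 : HasDerivAt (fun x : ℝ => Real.exp (-a * x)) (Real.exp (-a * x) * (-a)) x := by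
      simpa using ((hasDerivAt_id x).const_mul (-a)).exp
    have h2 : HasDerivAt (fun x : ℝ => x ^ b) (b * x ^ (b - 1)) x :=
      Real.hasDerivAt_rpow_const (Or.inl hx0.ne')
    have := ((h1.mul h2).const_mul k).neg
    convert this using 1
    case e'_8 => ext y; show -(k * Real.exp (-a * y) * y ^ b) = _; simp only [Pi.neg_apply, Pi.mul_apply]; ring
    case e'_9 => show k * Real.exp (-a * x) * (a * x ^ b - b * x ^ (b - 1)) = _; ring
    all_goals rfl
  have hlim : Tendsto g atTop (𝓝 0) := by
    have := (tendsto_rpow_mul_exp_neg_mul_atTop_nhds_zero b a ha).const_mul k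
    rw [mul_zero] at this
    have h2 := this.neg
    rw [neg_zero] at h2
    apply h2.congr
    intro x; simp only [hgdef]; ring
  have hpos : ∀ x ∈ Ioi t, 0 ≤ g' x := by
    intro x hx
    have hx0 : 0 < x := lt_trans ht0 hx
    have hxb : b / a < x := by
      have : b / a < k * b / (k * a - 1) := by
        rw [div_lt_div_iff₀ ha (by linarith)]
        nlinarith
      linarith [lt_of_lt_of_le this ht, hx.out]
    have : 0 ≤ a * x ^ b - b * x ^ (b - 1) := by
      have hxp : x ^ (b - 1) * x = x ^ b := by
        rw [← Real.rpow_add_one hx0.ne' (b-1)]; ring_nf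
      have : b * x ^ (b-1) ≤ a * x * x ^ (b-1) := by
        have : b ≤ a * x := by rw [div_lt_iff₀ ha] at hxb; linarith
        nlinarith [Real.rpow_nonneg hx0.le (b-1)]
      nlinarith [Real.rpow_nonneg hx0.le (b-1)]
    positivity
  have hint : IntegrableOn g' (Ioi t) :=
    integrableOn_Ioi_deriv_of_nonneg' hderiv hpos hlim
  have hval : ∫ x in Ioi t, g' x = 0 - g t :=
    integral_Ioi_of_hasDerivAt_of_nonneg' hderiv hpos hlim
  have hmono : ∀ᵐ x ∂(volume.restrict (Ioi t)),
      Real.exp (-a * x) * x ^ b ≤ g' x := by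
    filter_upwards [ae_restrict_mem measurableSet_Ioi] with x hx
    have hx0 : 0 < x := lt_trans ht0 hx
    have hxp : x ^ (b - 1) * x = x ^ b := by
      rw [← Real.rpow_add_one hx0.ne' (b-1)]; ring_nf
    have key : x ^ b ≤ k * (a * x ^ b - b * x ^ (b - 1)) := by
      have h1 : k * b ≤ x * (k * a - 1) := by
        rw [div_le_iff₀ (by linarith)] at ht
        nlinarith [hx.out]
      -- multiply by x^(b-1) ≥ 0
      have h2 := mul_le_mul_of_nonneg_right h1 (Real.rpow_nonneg hx0.le (b-1))
      nlinarith [Real.rpow_nonneg hx0.le (b-1)]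
    calc Real.exp (-a * x) * x ^ b ≤ Real.exp (-a * x) * (k * (a * x ^ b - b * x ^ (b-1))) :=
          mul_le_mul_of_nonneg_left key (Real.exp_pos _).le
      _ = g' x := by simp only [hg'def]; ring
  have h0 : ∀ᵐ x ∂(volume.restrict (Ioi t)), 0 ≤ Real.exp (-a * x) * x ^ b := by
    filter_upwards [ae_restrict_mem measurableSet_Ioi] with x hx
    have hx0 : 0 < x := lt_trans ht0 hx
    positivity
  rw [MeasureTheory.integral_Ici_eq_integral_Ioi]
  calc ∫ x in Ioi t, Real.exp (-a * x) * x ^ b ≤ ∫ x in Ioi t, g' x :=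
        integral_mono_of_nonneg h0 hint hmono
    _ = 0 - g t := hval
    _ = k * Real.exp (-a * t) * t ^ b := by simp [hgdef]
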